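/- arXiv:2404.11548 — 2 statements merged into one kernel-verified Lean document; each statement's English description precedes it below -/
import Mathlib

section
/- Let f : [-R, 0] → ℝ be a nonnegative concave function, let β > -1/2, and let t ∈ (-R, 0). Set p = f(t). Then ∫_{-R}^{t} f(x)/|t+x|^{2β+5} dx ≤ a₊(β)·p/|t|^{2β+4} and ∫_{t}^{0} f(x)/|t+x|^{2β+5} dx ≥ a₋(β)·p/|t|^{2β+4}, where a₊(β) = ∫₁^∞ τ/(1+τ)^{2β+5} dτ and a₋(β) = ∫₀^1 τ/(1+τ)^{2β+5} dτ. -/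
open Set intervalIntegral

set_option maxHeartbeats 1000000 in
/-- For a nonnegative concave function `f` on `[-R,0]`, `β > -1/2`, `t ∈ (-R,0)`
and `p = f(t)`:
`∫_{-R}^t f(x)/|t+x|^{2β+5} dx ≤ a₊(β) p/|t|^{2β+4}` and
`∫_t^0 f(x)/|t+x|^{2β+5} dx ≥ a₋(β) p/|t|^{2β+4}`. -/
theorem concave_chord_integral_bounds
    (R β t : ℝ) (hR : 0 < R) (hβ : -1/2 < β) (ht : t ∈ Ioo (-R) 0)
    (f : ℝ → ℝ)
    (hconc : ConcaveOn ℝ (Icc (-R) 0) f)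
    (hnonneg : ∀ x ∈ Icc (-R) 0, 0 ≤ f x)
    (p : ℝ) (hp : p = f t)
    (aplus aminus : ℝ)
    (haplus : aplus = ∫ τ in Ioi (1:ℝ), τ / (1+τ)^(2*β+5))
    (haminus : aminus = ∫ τ in (0:ℝ)..1, τ / (1+τ)^(2*β+5)) :
    (∫ x in (-R)..t, f x / |t+x| ^ (2*β+5)) ≤ aplus * p / |t| ^ (2*β+4) ∧
    aminus * p / |t| ^ (2*β+4) ≤ ∫ x in t..(0:ℝ), f x / |t+x| ^ (2*β+5) := by
  obtain ⟨hRt, ht0⟩ := ht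
  have htne : t ≠ 0 := ne_of_lt ht0
  have habs : |t| = -t := abs_of_neg ht0
  have htabs : (0:ℝ) < |t| := abs_pos.mpr htne
  set γ : ℝ := 2*β+5 with hγ
  have hγpos : (0:ℝ) < γ := by simp only [hγ]; linarith
  have hpnn : 0 ≤ p := hp ▸ hnonneg t ⟨hRt.le, ht0.le⟩
  -- chord bounds
  have chord_left : ∀ x ∈ Icc (-R) t, f x ≤ p / t * x := by
    intro x hx
    obtain ⟨hx1, hx2⟩ := hx
    have hx0 : x < 0 := lt_of_le_of_lt hx2 ht0
    have hxI : x ∈ Icc (-R) 0 := ⟨hx1, hx0.le⟩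
    have h0I : (0:ℝ) ∈ Icc (-R) 0 := ⟨by linarith, le_refl 0⟩
    have hane : x ≠ 0 := ne_of_lt hx0
    have ha : 0 < t / x := div_pos_iff.mpr (Or.inr ⟨ht0, hx0⟩)
    have ha1 : t / x ≤ 1 := by
      rw [div_le_one_of_neg hx0]; exact hx2
    have hb : 0 ≤ 1 - t / x := by linarith
    have key := hconc.2 hxI h0I ha.le hb (by ring)
    simp only [smul_eq_mul, mul_zero, add_zero] at key
    rw [div_mul_cancel₀ _ hane] at key
    have hf0 : 0 ≤ f 0 := hnonneg 0 h0I
    have h2 : t / x * f x ≤ p := by rw [hp]; nlinarith [mul_nonneg hb hf0]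
    have h3 : f x ≤ p / (t / x) := by
      rw [le_div_iff₀ ha]; linarith [mul_comm (t / x) (f x)]
    calc f x ≤ p / (t / x) := h3
      _ = p / t * x := by rw [div_div_eq_mul_div]; ring
  have chord_right : ∀ x ∈ Icc t 0, p / t * x ≤ f x := by
    intro x hx
    obtain ⟨hx1, hx2⟩ := hx
    have hxI : x ∈ Icc (-R) 0 := ⟨by linarith, hx2⟩
    have htI : t ∈ Icc (-R) 0 := ⟨hRt.le, ht0.le⟩
    have h0I : (0:ℝ) ∈ Icc (-R) 0 := ⟨by linarith, le_refl 0⟩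
    have ha : 0 ≤ x / t := div_nonneg_of_nonpos hx2 ht0.le
    have ha1 : x / t ≤ 1 := by
      rw [div_le_one_of_neg ht0]; exact hx1
    have hb : 0 ≤ 1 - x / t := by linarith
    have key := hconc.2 htI h0I ha hb (by ring)
    simp only [smul_eq_mul, mul_zero, add_zero] at key
    rw [div_mul_cancel₀ _ htne] at key
    have hf0 : 0 ≤ f 0 := hnonneg 0 h0I
    have : x / t * f t ≤ f x := by nlinarith [mul_nonneg hb hf0]
    calc p / t * x = x / t * f t := by rw [hp]; ring
      _ ≤ f x := this
  -- denominators
  have hden_pos : ∀ x : ℝ, x ≤ 0 → (0:ℝ) < |t + x| ^ γ := by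
    intro x hx
    have : t + x ≠ 0 := by intro h; nlinarith
    exact Real.rpow_pos_of_pos (abs_pos.mpr this) γ
  -- the chord function
  set G : ℝ → ℝ := fun x => p / t * x / |t + x| ^ γ with hG
  have hGcont : ContinuousOn G {x : ℝ | x ≤ 0} := by
    apply ContinuousOn.div
    · exact (continuous_const.mul continuous_id).continuousOn
    · exact ((continuous_const.add continuous_id).abs.continuousOn).rpow_const
        (fun x _ => Or.inr hγpos.le)
    · intro x hx; exact (hden_pos x hx).ne'
  have hsub1 : Icc (-R) t ⊆ {x : ℝ | x ≤ 0} := fun x hx => le_trans hx.2 ht0.le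
  have hsub2 : Icc t 0 ⊆ {x : ℝ | x ≤ 0} := fun x hx => hx.2
  have hGint1 : IntervalIntegrable G MeasureTheory.volume (-R) t :=
    ((hGcont.mono hsub1).intervalIntegrable_of_Icc (by linarith))
  have hGint2 : IntervalIntegrable G MeasureTheory.volume t 0 :=
    ((hGcont.mono hsub2).intervalIntegrable_of_Icc ht0.le)
  -- continuity of f on the interior
  have hfc : ContinuousOn f (Ioo (-R) 0) := by
    have := hconc.continuousOn_interior
    rwa [interior_Icc] at this
  have hFcont : ∀ s : Set ℝ, s ⊆ Ioo (-R) 0 →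
      ContinuousOn (fun x => f x / |t + x| ^ γ) s := by
    intro s hs
    apply ContinuousOn.div (hfc.mono hs)
    · exact ((continuous_const.add continuous_id).abs.continuousOn).rpow_const
        (fun x _ => Or.inr hγpos.le)
    · intro x hx; exact (hden_pos x (hs hx).2.le).ne'
  have hGnonneg : ∀ x : ℝ, x ≤ 0 → 0 ≤ G x := by
    intro x hx
    apply div_nonneg _ (hden_pos x hx).le
    have : p / t ≤ 0 := div_nonpos_of_nonneg_of_nonpos hpnn ht0.le
    nlinarith
  -- integrability of the main integrand on [-R, t]
  have hF1 : IntervalIntegrable (fun x => f x / |t + x| ^ γ) MeasureTheory.volume (-R) t := by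
    rw [intervalIntegrable_iff_integrableOn_Ioc_of_le (by linarith : -R ≤ t)]
    have hGion : MeasureTheory.IntegrableOn G (Ioc (-R) t) MeasureTheory.volume := by
      rw [← intervalIntegrable_iff_integrableOn_Ioc_of_le (by linarith : -R ≤ t)]
      exact hGint1
    apply hGion.mono'
    · exact ((hFcont (Ioc (-R) t) (fun x hx => ⟨hx.1, lt_of_le_of_lt hx.2 ht0⟩)).aestronglyMeasurable
        measurableSet_Ioc)
    · rw [MeasureTheory.ae_restrict_iff' measurableSet_Ioc]
      apply MeasureTheory.ae_of_all
      intro x hx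
      have hxI : x ∈ Icc (-R) t := ⟨hx.1.le, hx.2⟩
      have hd := hden_pos x (le_trans hx.2 ht0.le)
      have h1 : 0 ≤ f x := hnonneg x ⟨hx.1.le, le_trans hx.2 ht0.le⟩
      have h2 : f x ≤ p / t * x := chord_left x hxI
      rw [Real.norm_eq_abs, abs_of_nonneg (div_nonneg h1 hd.le)]
      exact div_le_div_of_nonneg_right h2 hd.le |>.trans_eq rfl
    -- the above `div_le_div` name may be wrong; fixed below if needed
  -- upper bound for f on [t,0]
  have hub : ∀ x ∈ Icc t 0, f x ≤ p * R / (t + R) := by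
    intro x hx
    obtain ⟨hx1, hx2⟩ := hx
    have htR : 0 < t + R := by linarith
    have hxR : 0 < x + R := by linarith
    have hxI : x ∈ Icc (-R) 0 := ⟨by linarith, hx2⟩
    have hRI : (-R) ∈ Icc (-R) 0 := ⟨le_refl _, by linarith⟩
    have hb : 0 < (t + R) / (x + R) := div_pos htR hxR
    have hb1 : (t + R) / (x + R) ≤ 1 := by
      rw [div_le_one hxR]; linarith
    have ha : 0 ≤ 1 - (t + R) / (x + R) := by linarith
    have key := hconc.2 hRI hxI ha hb.le (by ring)
    simp only [smul_eq_mul] at key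
    have harg : (1 - (t + R) / (x + R)) * (-R) + (t + R) / (x + R) * x = t := by
      field_simp
      ring
    rw [harg] at key
    have hfR : 0 ≤ f (-R) := hnonneg _ hRI
    have h2 : (t + R) / (x + R) * f x ≤ p := by
      rw [hp]; nlinarith [mul_nonneg ha hfR]
    have h3 : f x ≤ p / ((t + R) / (x + R)) := by
      rw [le_div_iff₀ hb]; linarith [mul_comm ((t + R) / (x + R)) (f x)]
    have h4 : p / ((t + R) / (x + R)) = p * (x + R) / (t + R) := by
      rw [div_div_eq_mul_div]
    have h5 : p * (x + R) / (t + R) ≤ p * R / (t + R) := by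
      apply div_le_div_of_nonneg_right _ htR.le
      nlinarith
    linarith [h3, h4 ▸ h3]
  -- integrability of the main integrand on [t, 0]
  have hF2 : IntervalIntegrable (fun x => f x / |t + x| ^ γ) MeasureTheory.volume t 0 := by
    rw [intervalIntegrable_iff_integrableOn_Ioc_of_le ht0.le]
    set H : ℝ → ℝ := fun x => (p * R / (t + R)) / |t + x| ^ γ with hH
    have hHcont : ContinuousOn H {x : ℝ | x ≤ 0} := by
      apply ContinuousOn.div continuousOn_const
      · exact ((continuous_const.add continuous_id).abs.continuousOn).rpow_const
          (fun x _ => Or.inr hγpos.le)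
      · intro x hx; exact (hden_pos x hx).ne'
    have hHioo : MeasureTheory.IntegrableOn H (Ioo t 0) MeasureTheory.volume := by
      apply MeasureTheory.IntegrableOn.mono_set _ Ioo_subset_Ioc_self
      rw [← intervalIntegrable_iff_integrableOn_Ioc_of_le ht0.le]
      exact (hHcont.mono hsub2).intervalIntegrable_of_Icc ht0.le
    have hIoo : MeasureTheory.IntegrableOn (fun x => f x / |t + x| ^ γ) (Ioo t 0)
        MeasureTheory.volume := by
      apply hHioo.mono'
      · exact ((hFcont (Ioo t 0) (fun x hx => ⟨lt_trans (by linarith) hx.1, hx.2⟩)).aestronglyMeasurable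
          measurableSet_Ioo)
      · rw [MeasureTheory.ae_restrict_iff' measurableSet_Ioo]
        apply MeasureTheory.ae_of_all
        intro x hx
        have hd := hden_pos x hx.2.le
        have h1 : 0 ≤ f x := hnonneg x ⟨by linarith [hx.1], hx.2.le⟩
        have h2 : f x ≤ p * R / (t + R) := hub x ⟨hx.1.le, hx.2.le⟩
        rw [Real.norm_eq_abs, abs_of_nonneg (div_nonneg h1 hd.le)]
        exact div_le_div_of_nonneg_right h2 hd.le
    exact hIoo.congr_set_ae MeasureTheory.Ioo_ae_eq_Ioc.symm
  -- key numerical facts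
  have hone_le : (1:ℝ) ≤ -R / t := by
    rw [le_div_iff_of_neg ht0]; linarith
  have hpow : |t| ^ γ = |t| ^ (2*β+4) * |t| := by
    have h : γ = (2*β+4) + 1 := by ring
    rw [h, Real.rpow_add htabs, Real.rpow_one]
  have hcoef : -t * (p / |t| ^ γ) = p / |t| ^ (2*β+4) := by
    rw [← habs, hpow]
    have h1 : |t| ^ (2*β+4) ≠ 0 := (Real.rpow_pos_of_pos htabs _).ne'
    field_simp
  -- pointwise value of G along the substitution x = t·τ
  have hval : ∀ τ : ℝ, 0 ≤ τ → G (t * τ) = p / |t| ^ γ * (τ / (1+τ) ^ γ) := by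
    intro τ hτ
    have h1 : t + t * τ = t * (1 + τ) := by ring
    have h1τ : (0:ℝ) < 1 + τ := by linarith
    have h2 : |t + t * τ| ^ γ = |t| ^ γ * (1+τ) ^ γ := by
      rw [h1, abs_mul, abs_of_nonneg h1τ.le, Real.mul_rpow (abs_nonneg t) h1τ.le]
    show p / t * (t * τ) / |t + t * τ| ^ γ = _
    rw [h2]
    have h3 : |t| ^ γ ≠ 0 := (Real.rpow_pos_of_pos htabs _).ne'
    have h4 : (1+τ) ^ γ ≠ 0 := (Real.rpow_pos_of_pos h1τ _).ne'
    field_simp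
  -- left integral of the chord function
  have hL : ∫ x in (-R)..t, G x = p / |t| ^ (2*β+4) * ∫ τ in (1:ℝ)..(-R/t), τ / (1+τ) ^ γ := by
    have h0 : t * (-R / t) = -R := by field_simp
    have h1 := smul_integral_comp_mul_left G (a := -R/t) (b := 1) t
    rw [h0, mul_one] at h1
    have h2 : ∫ τ in (-R/t)..(1:ℝ), G (t * τ)
        = p / |t| ^ γ * ∫ τ in (-R/t)..(1:ℝ), τ / (1+τ) ^ γ := by
      rw [← intervalIntegral.integral_const_mul]
      apply intervalIntegral.integral_congr
      intro τ hτ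
      rw [uIcc_comm, uIcc_of_le hone_le] at hτ
      exact hval τ (by linarith [hτ.1])
    rw [← h1, smul_eq_mul, h2, intervalIntegral.integral_symm]
    linear_combination (∫ τ in (1:ℝ)..(-R/t), τ / (1+τ) ^ γ) * hcoef
  -- right integral of the chord function
  have hRc : ∫ x in t..(0:ℝ), G x = p / |t| ^ (2*β+4) * aminus := by
    have h1 := smul_integral_comp_mul_left G (a := (1:ℝ)) (b := 0) t
    rw [mul_one, mul_zero] at h1
    have h2 : ∫ τ in (1:ℝ)..(0:ℝ), G (t * τ)
        = p / |t| ^ γ * ∫ τ in (1:ℝ)..(0:ℝ), τ / (1+τ) ^ γ := by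
      rw [← intervalIntegral.integral_const_mul]
      apply intervalIntegral.integral_congr
      intro τ hτ
      rw [uIcc_comm, uIcc_of_le (by norm_num : (0:ℝ) ≤ 1)] at hτ
      exact hval τ hτ.1
    rw [← h1, smul_eq_mul, h2, intervalIntegral.integral_symm, haminus]
    linear_combination (∫ τ in (0:ℝ)..(1:ℝ), τ / (1+τ) ^ γ) * hcoef
  -- integrability of τ/(1+τ)^γ on Ioi 1 and comparison with aplus
  have hIoiInt : MeasureTheory.IntegrableOn (fun τ : ℝ => τ / (1+τ) ^ γ) (Ioi 1)
      MeasureTheory.volume := by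
    have hcmp : MeasureTheory.IntegrableOn (fun τ : ℝ => τ ^ (1-γ)) (Ioi 1)
        MeasureTheory.volume := (integrableOn_Ioi_rpow_iff one_pos).mpr (by
      simp only [hγ]; linarith)
    apply hcmp.mono'
    · apply ContinuousOn.aestronglyMeasurable _ measurableSet_Ioi
      apply ContinuousOn.div continuousOn_id
      · exact ((continuous_const.add continuous_id).continuousOn).rpow_const
          (fun x _ => Or.inr hγpos.le)
      · intro x hx
        have : (0:ℝ) < 1 + x := by have := mem_Ioi.mp hx; linarith
        exact (Real.rpow_pos_of_pos this _).ne'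
    · rw [MeasureTheory.ae_restrict_iff' measurableSet_Ioi]
      apply MeasureTheory.ae_of_all
      intro τ hτ
      have hτ1 : (1:ℝ) < τ := mem_Ioi.mp hτ
      have hτ0 : (0:ℝ) < τ := by linarith
      have hbase : τ ^ γ ≤ (1+τ) ^ γ :=
        Real.rpow_le_rpow hτ0.le (by linarith) hγpos.le
      have htγ : (0:ℝ) < τ ^ γ := Real.rpow_pos_of_pos hτ0 _
      have h1 : τ / (1+τ) ^ γ ≤ τ / τ ^ γ :=
        div_le_div_of_nonneg_left hτ0.le htγ hbase
      have h2 : τ / τ ^ γ = τ ^ (1-γ) := by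
        rw [Real.rpow_sub hτ0, Real.rpow_one]
      rw [Real.norm_eq_abs, abs_of_nonneg (div_nonneg hτ0.le (Real.rpow_nonneg (by linarith) _))]
      rw [← h2]
      exact h1
  have hsub_le : (∫ τ in (1:ℝ)..(-R/t), τ / (1+τ) ^ γ) ≤ aplus := by
    rw [intervalIntegral.integral_of_le hone_le, haplus]
    apply MeasureTheory.setIntegral_mono_set hIoiInt
    · filter_upwards [MeasureTheory.ae_restrict_mem measurableSet_Ioi] with τ hτ
      have hτ1 : (1:ℝ) < τ := mem_Ioi.mp hτ
      exact div_nonneg (by linarith) (Real.rpow_nonneg (by linarith) _)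
    · exact (Ioc_subset_Ioi_self).eventuallyLE
  have hcoef_nn : 0 ≤ p / |t| ^ (2*β+4) :=
    div_nonneg hpnn (Real.rpow_nonneg (abs_nonneg t) _)
  constructor
  · calc ∫ x in (-R)..t, f x / |t+x| ^ γ
        ≤ ∫ x in (-R)..t, G x := by
          apply intervalIntegral.integral_mono_on (by linarith) hF1 hGint1
          intro x hx
          exact div_le_div_of_nonneg_right (chord_left x hx)
            (hden_pos x (le_trans hx.2 ht0.le)).le
      _ = p / |t| ^ (2*β+4) * ∫ τ in (1:ℝ)..(-R/t), τ / (1+τ) ^ γ := hL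
      _ ≤ p / |t| ^ (2*β+4) * aplus := mul_le_mul_of_nonneg_left hsub_le hcoef_nn
      _ = aplus * p / |t| ^ (2*β+4) := by ring
  · calc aminus * p / |t| ^ (2*β+4) = p / |t| ^ (2*β+4) * aminus := by ring
      _ = ∫ x in t..(0:ℝ), G x := hRc.symm
      _ ≤ ∫ x in t..(0:ℝ), f x / |t+x| ^ γ := by
          apply intervalIntegral.integral_mono_on ht0.le hGint2 hF2
          intro x hx
          exact div_le_div_of_nonneg_right (chord_right x hx) (hden_pos x hx.2).le
end

section
/- Let f : [-R,0] → ℝ be nonnegative and concave, β > -1/2, t ∈ (-R, 0), and s(t) = ∫_t^0 f(x) dx. Then 2^{-(2β+5)} a₀(β) s(t)/|t|^{2β+5} ≤ a₀(β) ∫_{-R}^0 f(x)/|t+x|^{2β+5} dx ≤ a₀(β)(1 + a₊(β)/a₋(β)) s(t)/|t|^{2β+5}, where a₀(β) = ∫₀^∞ τ^{2β+4} e^{-2τ} dτ, a₊(β) = ∫₁^∞ τ/(1+τ)^{2β+5} dτ, a₋(β) = ∫₀^1 τ/(1+τ)^{2β+5} dτ. -/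
open Set intervalIntegral MeasureTheory

set_option maxHeartbeats 1000000 in
/-- Lemma 2 core estimate: for `f` nonnegative concave on `[-R,0]`, `β > -1/2`,
`t ∈ (-R,0)` and `s(t) = ∫_t^0 f`, the integral `a₀(β)∫_{-R}^0 f(x)/|t+x|^{2β+5}dx`
is comparable to `s(t)/|t|^{2β+5}`. -/
theorem kernel_comparable_to_area
    (R β t : ℝ) (hR : 0 < R) (hβ : -1/2 < β) (ht : t ∈ Ioo (-R) 0)
    (f : ℝ → ℝ)
    (hconc : ConcaveOn ℝ (Icc (-R) 0) f)
    (hnonneg : ∀ x ∈ Icc (-R) 0, 0 ≤ f x)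
    (s a₀ aplus aminus : ℝ)
    (hs : s = ∫ x in t..(0:ℝ), f x)
    (ha₀ : a₀ = ∫ τ in Ioi (0:ℝ), τ ^ (2*β+4) * Real.exp (-2*τ))
    (haplus : aplus = ∫ τ in Ioi (1:ℝ), τ / (1+τ)^(2*β+5))
    (haminus : aminus = ∫ τ in (0:ℝ)..1, τ / (1+τ)^(2*β+5)) :
    2 ^ (-(2*β+5)) * a₀ * s / |t| ^ (2*β+5)
      ≤ a₀ * ∫ x in (-R)..(0:ℝ), f x / |t+x| ^ (2*β+5) ∧
    a₀ * (∫ x in (-R)..(0:ℝ), f x / |t+x| ^ (2*β+5))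
      ≤ a₀ * (1 + aplus / aminus) * s / |t| ^ (2*β+5) := by
  obtain ⟨htR, ht0⟩ := ht
  set p : ℝ := 2*β+5 with hpdef
  have hp4 : (4:ℝ) < p := by simp only [hpdef]; linarith
  have hp0 : (0:ℝ) < p := by linarith
  have htpos : (0:ℝ) < -t := by linarith
  have habs : |t| = -t := abs_of_neg ht0
  have htne : t ≠ 0 := ne_of_lt ht0
  have hmemt : t ∈ Icc (-R) (0:ℝ) := ⟨le_of_lt htR, le_of_lt ht0⟩
  -- positivity of denominators
  have hdpos : ∀ x ∈ Icc (-R) (0:ℝ), (0:ℝ) < -(t+x) := by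
    intro x hx; nlinarith [hx.2]
  have habs' : ∀ x ∈ Icc (-R) (0:ℝ), |t+x| = -(t+x) := by
    intro x hx; exact abs_of_neg (by nlinarith [hx.2, hdpos x hx])
  have hge : ∀ x ∈ Icc (-R) (0:ℝ), -t ≤ |t+x| := by
    intro x hx; rw [habs' x hx]; linarith [hx.2]
  -- uniform bound on f
  have hM : ∀ x ∈ Icc (-R) (0:ℝ), f x ≤ 2 * f (-R/2) := by
    intro x hx
    have hx' : -R - x ∈ Icc (-R) (0:ℝ) := ⟨by linarith [hx.2], by linarith [hx.1]⟩
    have := hconc.2 hx hx' (by norm_num : (0:ℝ) ≤ 1/2) (by norm_num : (0:ℝ) ≤ 1/2)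
      (by norm_num)
    simp only [smul_eq_mul] at this
    have h0 := hnonneg _ hx'
    have heq : (1/2 : ℝ) * x + 1/2 * (-R - x) = -R/2 := by ring
    rw [heq] at this
    linarith
  have hMnn : 0 ≤ 2 * f (-R/2) := by
    have := hnonneg (-R/2) ⟨by linarith, by linarith⟩; linarith
  -- measurability of f on subintervals of (-R,0]
  have hcont : ContinuousOn f (Ioo (-R) 0) :=
    (hconc.subset Ioo_subset_Icc_self (convex_Ioo _ _)).continuousOn isOpen_Ioo
  have hfm : AEStronglyMeasurable f (volume.restrict (Ioo (-R) 0)) :=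
    hcont.aestronglyMeasurable measurableSet_Ioo
  have hmeas : ∀ a b : ℝ, -R ≤ a → b ≤ 0 →
      AEStronglyMeasurable f (volume.restrict (Ioc a b)) := by
    intro a b ha hb
    rw [Measure.restrict_congr_set (MeasureTheory.Ioo_ae_eq_Ioc).symm]
    exact hfm.mono_measure (Measure.restrict_mono (Ioo_subset_Ioo ha hb) le_rfl)
  -- integrability of f on subintervals
  have hfint : ∀ a b : ℝ, -R ≤ a → a ≤ b → b ≤ 0 → IntervalIntegrable f volume a b := by
    intro a b ha hab hb
    rw [intervalIntegrable_iff_integrableOn_Ioc_of_le hab]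
    refine Integrable.mono' (integrable_const (2 * f (-R/2))) (hmeas a b ha hb) ?_
    filter_upwards [ae_restrict_mem measurableSet_Ioc] with x hx
    have hx' : x ∈ Icc (-R) (0:ℝ) := ⟨le_trans ha (le_of_lt hx.1), le_trans hx.2 hb⟩
    rw [Real.norm_eq_abs, abs_of_nonneg (hnonneg x hx')]
    exact hM x hx'
  -- the kernel integrand
  set F : ℝ → ℝ := fun x => f x / |t+x| ^ p with hFdef
  have hFnn : ∀ x ∈ Icc (-R) (0:ℝ), 0 ≤ F x := by
    intro x hx
    exact div_nonneg (hnonneg x hx) (Real.rpow_nonneg (abs_nonneg _) _)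
  have hFbound : ∀ x ∈ Icc (-R) (0:ℝ), F x ≤ 2 * f (-R/2) / (-t) ^ p := by
    intro x hx
    refine div_le_div₀ hMnn (hM x hx) (Real.rpow_pos_of_pos htpos p) ?_
    exact Real.rpow_le_rpow (le_of_lt htpos) (hge x hx) (le_of_lt hp0)
  have hFint : ∀ a b : ℝ, -R ≤ a → a ≤ b → b ≤ 0 → IntervalIntegrable F volume a b := by
    intro a b ha hab hb
    rw [intervalIntegrable_iff_integrableOn_Ioc_of_le hab]
    have hker : Continuous fun x : ℝ => |t+x| ^ p :=
      (Real.continuous_rpow_const hp0.le).comp ((continuous_const.add continuous_id).abs)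
    refine Integrable.mono' (integrable_const (2 * f (-R/2) / (-t) ^ p)) ?_ ?_
    · exact (((hmeas a b ha hb).aemeasurable).div hker.aemeasurable).aestronglyMeasurable
    · filter_upwards [ae_restrict_mem measurableSet_Ioc] with x hx
      have hx' : x ∈ Icc (-R) (0:ℝ) := ⟨le_trans ha (le_of_lt hx.1), le_trans hx.2 hb⟩
      rw [Real.norm_eq_abs, abs_of_nonneg (hFnn x hx')]
      exact hFbound x hx'
  clear_value F
  -- basic constants
  have hft : 0 ≤ f t := hnonneg t hmemt
  have h0mem : (0:ℝ) ∈ Icc (-R) (0:ℝ) := ⟨by linarith, le_rfl⟩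
  have hf0 : 0 ≤ f 0 := hnonneg 0 h0mem
  have hint_f : IntervalIntegrable f volume t 0 := hfint t 0 htR.le ht0.le le_rfl
  have hs_nonneg : 0 ≤ s := by
    rw [hs]
    exact intervalIntegral.integral_nonneg ht0.le
      (fun u hu => hnonneg u ⟨le_trans htR.le hu.1, hu.2⟩)
  have ha₀nn : 0 ≤ a₀ := by
    rw [ha₀]
    refine setIntegral_nonneg measurableSet_Ioi (fun τ hτ => ?_)
    exact mul_nonneg (Real.rpow_nonneg (le_of_lt hτ) _) (Real.exp_nonneg _)
  have haplusnn : 0 ≤ aplus := by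
    rw [haplus]
    refine setIntegral_nonneg measurableSet_Ioi (fun τ hτ => ?_)
    have h1τ : (1:ℝ) < τ := hτ
    exact div_nonneg (by linarith) (Real.rpow_nonneg (by linarith) _)
  have hg₁cont : ContinuousOn (fun τ : ℝ => τ / (1+τ)^p) (Icc (0:ℝ) 1) := by
    refine ContinuousOn.div continuousOn_id ?_ (fun τ hτ =>
      ne_of_gt (Real.rpow_pos_of_pos (by linarith [hτ.1]) p))
    exact ((Real.continuous_rpow_const hp0.le).comp (continuous_const.add continuous_id)).continuousOn
  have hg₁int : IntervalIntegrable (fun τ : ℝ => τ / (1+τ)^p) volume 0 1 := by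
    apply ContinuousOn.intervalIntegrable
    rwa [uIcc_of_le (by norm_num : (0:ℝ) ≤ 1)]
  have haminus_pos : 0 < aminus := by
    rw [haminus]
    refine intervalIntegral_pos_of_pos_on hg₁int (fun τ hτ => ?_) one_pos
    exact div_pos hτ.1 (Real.rpow_pos_of_pos (by linarith [hτ.1]) p)
  have haminus_le : aminus ≤ 1/2 := by
    have h1 : aminus ≤ ∫ τ in (0:ℝ)..1, τ := by
      rw [haminus]
      refine integral_mono_on (by norm_num) hg₁int intervalIntegrable_id (fun τ hτ => ?_)
      exact div_le_self hτ.1 (Real.one_le_rpow (by linarith [hτ.1]) hp0.le)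
    rwa [integral_id, show ((1:ℝ)^2 - 0^2)/2 = 1/2 by norm_num] at h1
  -- chord bound : (-t) * f t / 2 ≤ s
  have hchord : (-t) * f t / 2 ≤ s := by
    have hlin : ∫ x in t..0, f t / t * x = (-t) * f t / 2 := by
      rw [intervalIntegral.integral_const_mul, integral_id]
      field_simp
      ring
    have hptw : ∀ x ∈ Icc t 0, f t / t * x ≤ f x := by
      intro x hx
      have hxmem : x ∈ Icc (-R) (0:ℝ) := ⟨le_trans htR.le hx.1, hx.2⟩
      have ha : 0 ≤ x / t := by
        rw [div_nonneg_iff]; right; exact ⟨hx.2, ht0.le⟩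
      have hxt1 : x / t ≤ 1 := by
        rw [div_le_one_iff]; right; right; exact ⟨ht0, hx.1⟩
      have hcc := hconc.2 hmemt h0mem ha (by linarith : 0 ≤ 1 - x/t) (by ring)
      simp only [smul_eq_mul, mul_zero, add_zero] at hcc
      rw [div_mul_cancel₀ x htne] at hcc
      have e1 : f t / t * x = x / t * f t := by ring
      linarith [mul_nonneg (by linarith : (0:ℝ) ≤ 1 - x/t) hf0]
    have h2 : ∫ x in t..0, f t / t * x ≤ ∫ x in t..0, f x :=
      integral_mono_on ht0.le ((continuous_const.mul continuous_id).intervalIntegrable _ _)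
        hint_f hptw
    rw [hs]; linarith [hlin ▸ h2]
  -- splitting of the main integral
  have hsplit : (∫ x in (-R)..t, F x) + ∫ x in t..0, F x = ∫ x in (-R)..(0:ℝ), F x :=
    integral_add_adjacent_intervals (hFint (-R) t le_rfl htR.le ht0.le)
      (hFint t 0 htR.le ht0.le le_rfl)
  -- upper bound on the near part
  have hB : ∫ x in t..0, F x ≤ s / (-t) ^ p := by
    have h1 : ∫ x in t..0, F x ≤ ∫ x in t..0, f x / (-t) ^ p := by
      refine integral_mono_on ht0.le (hFint t 0 htR.le ht0.le le_rfl)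
        (hint_f.div_const _) (fun x hx => ?_)
      have hxmem : x ∈ Icc (-R) (0:ℝ) := ⟨le_trans htR.le hx.1, hx.2⟩
      simp only [hFdef]
      exact div_le_div_of_nonneg_left (hnonneg x hxmem) (Real.rpow_pos_of_pos htpos p)
        (Real.rpow_le_rpow htpos.le (hge x hxmem) hp0.le)
    rwa [intervalIntegral.integral_div, ← hs] at h1
  -- lower bound on the near part
  have hBlow : 2 ^ (-p) * s / (-t) ^ p ≤ ∫ x in t..0, F x := by
    have h1 : ∫ x in t..0, f x / (2*(-t)) ^ p ≤ ∫ x in t..0, F x := by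
      refine integral_mono_on ht0.le (hint_f.div_const _)
        (hFint t 0 htR.le ht0.le le_rfl) (fun x hx => ?_)
      have hxmem : x ∈ Icc (-R) (0:ℝ) := ⟨le_trans htR.le hx.1, hx.2⟩
      have hle : |t+x| ≤ 2*(-t) := by rw [habs' x hxmem]; linarith [hx.1]
      have hpos : 0 < |t+x| ^ p :=
        Real.rpow_pos_of_pos (lt_of_lt_of_le htpos (hge x hxmem)) p
      simp only [hFdef]
      exact div_le_div_of_nonneg_left (hnonneg x hxmem) hpos
        (Real.rpow_le_rpow (abs_nonneg _) hle hp0.le)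
    have h2 : ∫ x in t..0, f x / (2*(-t)) ^ p = s / (2*(-t)) ^ p := by
      rw [intervalIntegral.integral_div, ← hs]
    have h3 : s / (2*(-t)) ^ p = 2 ^ (-p) * s / (-t) ^ p := by
      rw [Real.mul_rpow (by norm_num : (0:ℝ) ≤ 2) htpos.le,
        Real.rpow_neg (by norm_num : (0:ℝ) ≤ 2)]
      ring
    rw [← h3, ← h2]; exact h1
  -- far part nonnegative
  have hAnn : 0 ≤ ∫ x in (-R)..t, F x := by
    refine intervalIntegral.integral_nonneg htR.le (fun u hu => ?_)
    exact hFnn u ⟨hu.1, le_trans hu.2 ht0.le⟩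
  -- upper bound on the far part
  set T : ℝ := R / (-t) with hTdef
  have hT1 : 1 < T := (one_lt_div htpos).mpr (by linarith)
  have hA : ∫ x in (-R)..t, F x ≤ aplus / aminus * s / (-t) ^ p := by
    set G : ℝ → ℝ := fun x => (f t / t * x) / (-(t+x)) ^ p with hGdef
    have hGcont : ContinuousOn G (Icc (-R) t) := by
      refine ContinuousOn.div (continuous_const.mul continuous_id).continuousOn
        (((Real.continuous_rpow_const hp0.le).comp
          ((continuous_const.add continuous_id).neg)).continuousOn)
        (fun x hx => ne_of_gt (Real.rpow_pos_of_pos (by nlinarith [hx.2] : 0 < -(t+x)) p))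
    have h1 : ∫ x in (-R)..t, F x ≤ ∫ x in (-R)..t, G x := by
      refine integral_mono_on htR.le (hFint (-R) t le_rfl htR.le ht0.le)
        (hGcont.intervalIntegrable_of_Icc htR.le) (fun x hx => ?_)
      have hxmem : x ∈ Icc (-R) (0:ℝ) := ⟨hx.1, le_trans hx.2 ht0.le⟩
      have hxneg : x < 0 := lt_of_le_of_lt hx.2 ht0
      have hxne : x ≠ 0 := ne_of_lt hxneg
      -- concavity: f x ≤ f t / t * x
      have hfx : f x ≤ f t / t * x := by
        have ha : 0 ≤ t / x := by
          rw [div_nonneg_iff]; right; exact ⟨ht0.le, hxneg.le⟩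
        have hb : t / x ≤ 1 := by
          rw [div_le_one_iff]; right; right; exact ⟨hxneg, hx.2⟩
        have hcc := hconc.2 hxmem h0mem ha (by linarith : 0 ≤ 1 - t/x) (by ring)
        simp only [smul_eq_mul, mul_zero, add_zero] at hcc
        rw [div_mul_cancel₀ t hxne] at hcc
        have h2 : t / x * f x ≤ f t := by
          nlinarith [mul_nonneg (by linarith : (0:ℝ) ≤ 1 - t/x) hf0]
        have h3 : x / t * (t / x * f x) ≤ x / t * f t := by
          refine mul_le_mul_of_nonneg_left h2 ?_
          rw [div_nonneg_iff]; right; exact ⟨hxneg.le, ht0.le⟩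
        have h4 : x / t * (t / x * f x) = f x := by field_simp
        calc f x = x / t * (t / x * f x) := h4.symm
          _ ≤ x / t * f t := h3
          _ = f t / t * x := by ring
      have hdpos' : (0:ℝ) < -(t+x) := by nlinarith [hx.2]
      simp only [hFdef, hGdef]
      rw [habs' x hxmem]
      exact (div_le_div_iff_of_pos_right (Real.rpow_pos_of_pos hdpos' p)).mpr hfx
    -- substitution x = t * σ
    set g : ℝ → ℝ := fun σ => (f t / t * (t*σ)) / (-(t + t*σ)) ^ p with hgdef
    have hcomp : ∀ x : ℝ, G x = g (x/t) := by
      intro x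
      simp only [hGdef, hgdef]
      rw [mul_div_cancel₀ x htne]
    have hsub1 : ∫ x in (-R)..t, G x = t • ∫ σ in (-R/t)..(t/t), g σ := by
      rw [← integral_comp_div (a := -R) (b := t) (f := g) htne]
      simp_rw [← hcomp]
    have hsub2 : ∫ x in (-R)..t, G x = (-t) * ∫ σ in (1:ℝ)..T, g σ := by
      rw [hsub1, div_self htne, show -R/t = T by rw [hTdef]; field_simp,
        integral_symm, smul_eq_mul]
      ring
    have hgeq : ∀ σ ∈ Icc (1:ℝ) T, g σ = f t / (-t) ^ p * (σ / (1+σ)^p) := by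
      intro σ hσ
      have hσ1 : (1:ℝ) ≤ σ := hσ.1
      simp only [hgdef]
      rw [show -(t + t*σ) = (-t) * (1+σ) by ring,
        Real.mul_rpow htpos.le (by linarith : (0:ℝ) ≤ 1+σ),
        show f t / t * (t*σ) = f t * σ by field_simp]
      rw [div_mul_div_comm]
    have hgint : ∫ σ in (1:ℝ)..T, g σ = f t / (-t) ^ p * ∫ σ in (1:ℝ)..T, σ / (1+σ)^p := by
      rw [← intervalIntegral.integral_const_mul]
      refine integral_congr (fun σ hσ => ?_)
      rw [uIcc_of_le hT1.le] at hσ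
      exact hgeq σ hσ
    -- tail integral dominated by aplus
    have hIntIoi : IntegrableOn (fun σ : ℝ => σ / (1+σ)^p) (Ioi (1:ℝ)) volume := by
      refine Integrable.mono' (integrableOn_Ioi_rpow_of_lt (by linarith : 1 - p < -1) one_pos)
        ?_ ?_
      · refine ContinuousOn.aestronglyMeasurable ?_ measurableSet_Ioi
        refine ContinuousOn.div continuousOn_id ?_ (fun σ hσ =>
          ne_of_gt (Real.rpow_pos_of_pos (by simp only [mem_Ioi] at hσ; linarith) p))
        exact ((Real.continuous_rpow_const hp0.le).comp
          (continuous_const.add continuous_id)).continuousOn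
      · filter_upwards [ae_restrict_mem measurableSet_Ioi] with σ hσ
        simp only [mem_Ioi] at hσ
        have hσ0 : (0:ℝ) < σ := by linarith
        have h1 : σ ^ (1-p) = σ / σ ^ p := by
          rw [Real.rpow_sub hσ0, Real.rpow_one]
        rw [Real.norm_eq_abs, abs_of_nonneg (div_nonneg hσ0.le (Real.rpow_nonneg (by linarith) p)), h1]
        exact div_le_div_of_nonneg_left hσ0.le (Real.rpow_pos_of_pos hσ0 p)
          (Real.rpow_le_rpow hσ0.le (by linarith) hp0.le)
    have hJ : ∫ σ in (1:ℝ)..T, σ / (1+σ)^p ≤ aplus := by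
      rw [intervalIntegral.integral_of_le hT1.le, haplus]
      refine setIntegral_mono_set hIntIoi ?_ (HasSubset.Subset.eventuallyLE Ioc_subset_Ioi_self)
      filter_upwards [ae_restrict_mem measurableSet_Ioi] with σ hσ
      simp only [mem_Ioi] at hσ
      exact div_nonneg (by linarith) (Real.rpow_nonneg (by linarith) p)
    -- combine
    have hA2 : ∫ x in (-R)..t, F x ≤ (-t) * (f t / (-t) ^ p * aplus) := by
      calc ∫ x in (-R)..t, F x ≤ ∫ x in (-R)..t, G x := h1
        _ = (-t) * (f t / (-t) ^ p * ∫ σ in (1:ℝ)..T, σ / (1+σ)^p) := by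
            rw [hsub2, hgint]
        _ ≤ (-t) * (f t / (-t) ^ p * aplus) := by
            refine mul_le_mul_of_nonneg_left ?_ htpos.le
            exact mul_le_mul_of_nonneg_left hJ
              (div_nonneg hft (Real.rpow_nonneg htpos.le p))
    have h5 : (-t) * f t ≤ s / aminus := by
      rw [le_div_iff₀ haminus_pos]
      nlinarith [mul_le_mul_of_nonneg_left haminus_le (mul_nonneg htpos.le hft)]
    calc ∫ x in (-R)..t, F x ≤ (-t) * (f t / (-t) ^ p * aplus) := hA2
      _ = aplus * ((-t) * f t) / (-t) ^ p := by ring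
      _ ≤ aplus * (s / aminus) / (-t) ^ p :=
          (div_le_div_iff_of_pos_right (Real.rpow_pos_of_pos htpos p)).mpr
            (mul_le_mul_of_nonneg_left h5 haplusnn)
      _ = aplus / aminus * s / (-t) ^ p := by ring
  -- conclude
  have hI1 : 2 ^ (-p) * s / (-t) ^ p ≤ ∫ x in (-R)..(0:ℝ), F x := by
    rw [← hsplit]; linarith
  have hI2 : ∫ x in (-R)..(0:ℝ), F x ≤ (1 + aplus / aminus) * s / (-t) ^ p := by
    rw [← hsplit]
    have : aplus / aminus * s / (-t) ^ p + s / (-t) ^ p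
        = (1 + aplus / aminus) * s / (-t) ^ p := by ring
    linarith
  rw [habs]
  constructor
  · calc 2 ^ (-p) * a₀ * s / (-t) ^ p = a₀ * (2 ^ (-p) * s / (-t) ^ p) := by ring
      _ ≤ a₀ * ∫ x in (-R)..(0:ℝ), F x := mul_le_mul_of_nonneg_left hI1 ha₀nn
  · calc a₀ * ∫ x in (-R)..(0:ℝ), F x
        ≤ a₀ * ((1 + aplus / aminus) * s / (-t) ^ p) := mul_le_mul_of_nonneg_left hI2 ha₀nn
      _ = a₀ * (1 + aplus / aminus) * s / (-t) ^ p := by ring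
end
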